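/- Let K be a number field with ring of integers O_K, and let 𝔟 be a nonzero fractional ideal of O_K, written as a quotient 𝔟 = 𝔟⁺/𝔟⁻ of relatively prime integral ideals. Then H_K(b) ≥ N(𝔟⁺) for every nonzero b ∈ 𝔟, where N denotes the absolute norm of an integral ideal. -/

import Mathlib

open NumberField
open scoped nonZeroDivisors

/-- The relative multiplicative height `H_K` of a projective point with
coordinates in the ring of integers. -/
noncomputable def heightVec {K : Type*} [Field K] [NumberField K]
    {ι : Type*} [Fintype ι] [Nonempty ι] (x : ι → 𝓞 K) : ℝ :=
  (∏ w : InfinitePlace K,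
      (Finset.univ.sup' Finset.univ_nonempty
        fun i => w (algebraMap (𝓞 K) K (x i))) ^ w.mult) /
    (Ideal.absNorm (Ideal.span (Set.range x)) : ℝ)

/-- if `𝔟 = 𝔟⁺/𝔟⁻` is a nonzero fractional ideal written as a
quotient of coprime integral ideals, then `H_K(b) ≥ N(𝔟⁺)` for every nonzero
`b ∈ 𝔟`.  The height of `b = x/y` is the height of the point `(x : y) ∈ ℙ¹(K)`. -/
theorem height_lower_bound_of_fractional_ideal
    {K : Type*} [Field K] [NumberField K]
    (bp bm : Ideal (𝓞 K)) (hcop : IsCoprime bp bm)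
    (𝔟 : FractionalIdeal (𝓞 K)⁰ K) (h𝔟0 : 𝔟 ≠ 0)
    (h𝔟 : 𝔟 = (bp : FractionalIdeal (𝓞 K)⁰ K) / (bm : FractionalIdeal (𝓞 K)⁰ K))
    (b : K) (hb : b ∈ 𝔟) (hb0 : b ≠ 0)
    (x y : 𝓞 K) (hy : y ≠ 0)
    (hxy : algebraMap (𝓞 K) K x / algebraMap (𝓞 K) K y = b) :
    (Ideal.absNorm bp : ℝ) ≤ heightVec ![x, y] := by
  have hy0 : algebraMap (𝓞 K) K y ≠ 0 := by
    simpa using hy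
  have hx0 : x ≠ 0 := by
    rintro rfl
    apply hb0
    rw [← hxy]
    simp
  have hxby : algebraMap (𝓞 K) K x = b * algebraMap (𝓞 K) K y := by
    rw [← hxy]; field_simp
  set d : Ideal (𝓞 K) := Ideal.span {x, y} with hd
  have hrange : Set.range ![x, y] = {x, y} := by
    ext z
    simp [Fin.exists_fin_two]
    tauto
  have hbm0 : (bm : FractionalIdeal (𝓞 K)⁰ K) ≠ 0 := by
    intro h
    apply h𝔟0
    rw [h𝔟, h, div_zero]
  -- key step : x * bm ⊆ bp * (y)
  have key : ∀ m ∈ bm, x * m ∈ bp * Ideal.span {y} := by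
    intro m hm
    have hb' : ∀ z ∈ (bm : FractionalIdeal (𝓞 K)⁰ K),
        b * z ∈ (bp : FractionalIdeal (𝓞 K)⁰ K) := by
      rw [h𝔟] at hb
      exact fun z hz => (FractionalIdeal.mem_div_iff_of_ne_zero hbm0).mp hb z hz
    have hmem : b * algebraMap (𝓞 K) K m ∈ (bp : FractionalIdeal (𝓞 K)⁰ K) :=
      hb' _ (FractionalIdeal.mem_coeIdeal _ |>.mpr ⟨m, hm, rfl⟩)
    obtain ⟨p, hp, hpeq⟩ := (FractionalIdeal.mem_coeIdeal _).mp hmem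
    have : algebraMap (𝓞 K) K (x * m) = algebraMap (𝓞 K) K (p * y) := by
      rw [map_mul, map_mul, hxby, hpeq]
      ring
    have hxm : x * m = p * y := by
      exact_mod_cast (FaithfulSMul.algebraMap_injective (𝓞 K) K) this
    rw [hxm]
    exact Ideal.mul_mem_mul hp (Ideal.subset_span rfl)
  have hxd : x ∈ d := Ideal.subset_span (Set.mem_insert _ _)
  have hxle : Ideal.span {x} ≤ bp * d := by
    rw [Ideal.span_singleton_le_iff_mem]
    obtain ⟨p, hp, m, hm, hpm⟩ := Ideal.isCoprime_iff_exists.mp hcop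
    have hx : x = p * x + x * m := by
      have : x * (p + m) = x * 1 := by rw [hpm]
      calc x = x * 1 := (mul_one x).symm
        _ = x * (p + m) := by rw [hpm]
        _ = p * x + x * m := by ring
    rw [hx]
    refine add_mem (Ideal.mul_mem_mul hp hxd) ?_
    exact Ideal.mul_mono_right (Ideal.span_mono (by simp)) (key m hm)
  have hdvd : Ideal.absNorm bp * Ideal.absNorm d ∣ (Algebra.norm ℤ x).natAbs := by
    rw [← MonoidWithZeroHom.map_mul Ideal.absNorm, ← Ideal.absNorm_span_singleton]
    exact Ideal.absNorm_dvd_absNorm_of_le hxle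
  have hnormx : Algebra.norm ℚ (algebraMap (𝓞 K) K x) ≠ 0 := by
    rw [Algebra.norm_ne_zero_iff]
    simpa using hx0
  have hnx0 : (Algebra.norm ℤ x).natAbs ≠ 0 := by
    rw [Int.natAbs_ne_zero]
    intro h
    apply hnormx
    rw [← Algebra.coe_norm_int, h]
    exact Int.cast_zero
  have hle1 : Ideal.absNorm bp * Ideal.absNorm d ≤ (Algebra.norm ℤ x).natAbs :=
    Nat.le_of_dvd (Nat.pos_of_ne_zero hnx0) hdvd
  have hd0 : Ideal.absNorm d ≠ 0 := by
    intro h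
    apply hnx0
    exact Nat.eq_zero_of_zero_dvd (by simpa [h] using hdvd)
  have hdpos : (0 : ℝ) < (Ideal.absNorm d : ℝ) := by
    exact_mod_cast Nat.pos_of_ne_zero hd0
  have habs : ((Algebra.norm ℤ x).natAbs : ℝ)
      = ∏ w : InfinitePlace K, w (algebraMap (𝓞 K) K x) ^ w.mult := by
    rw [NumberField.InfinitePlace.prod_eq_abs_norm, ← Algebra.coe_norm_int]
    push_cast
    rw [Nat.cast_natAbs]
    push_cast
    rfl
  have hprod : ∏ w : InfinitePlace K, w (algebraMap (𝓞 K) K x) ^ w.mult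
      ≤ ∏ w : InfinitePlace K,
        (Finset.univ.sup' Finset.univ_nonempty
          fun i => w (algebraMap (𝓞 K) K (![x, y] i))) ^ w.mult := by
    refine Finset.prod_le_prod (fun w _ => by positivity) (fun w _ => ?_)
    refine pow_le_pow_left₀ (by positivity) ?_ _
    have := Finset.le_sup' (f := fun i => w (algebraMap (𝓞 K) K (![x, y] i)))
      (Finset.mem_univ (0 : Fin 2))
    simpa using this
  rw [heightVec, hrange, le_div_iff₀ hdpos]
  calc (Ideal.absNorm bp : ℝ) * (Ideal.absNorm d : ℝ)
      = ((Ideal.absNorm bp * Ideal.absNorm d : ℕ) : ℝ) := by push_cast; ring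
    _ ≤ ((Algebra.norm ℤ x).natAbs : ℝ) := by exact_mod_cast hle1
    _ = _ := habs
    _ ≤ _ := hprod
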